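/- Let A be an acceptance set and S = (S_0, S_T), R = (R_0, R_T) two traded assets with S_0 = R_0, such that ρ_{A,S} and ρ_{A,R} are both lower semicontinuous. If ρ_{A,S}(x) ≤ ρ_{A,R}(x) for every x ∈ X, then ρ_{A,S} = ρ_{A,R}. (There is no strictly better eligible asset.) -/

import Mathlib

open BoundedContinuousFunction MeasureTheory Pointwise

variable {Ω : Type*} [TopologicalSpace Ω] [DiscreteTopology Ω] [Nonempty Ω]

/-- `X` is modeled as the Banach lattice `Ω →ᵇ ℝ` of bounded functions with sup norm
(the discrete topology makes every function continuous) and pointwise order.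
An acceptance set is a nonempty proper monotone subset of `X`. -/
def IsAcceptanceSet (A : Set (Ω →ᵇ ℝ)) : Prop :=
  A.Nonempty ∧ A ≠ Set.univ ∧ ∀ x ∈ A, ∀ y, x ≤ y → y ∈ A

/-- the risk measure `ρ_{A,S}` w.r.t. the acceptance set `A` and the traded asset
`S = (S0, ST)`, with values in the extended reals -/
noncomputable def riskMeasure (A : Set (Ω →ᵇ ℝ)) (S0 : ℝ) (ST : Ω →ᵇ ℝ) (x : Ω →ᵇ ℝ) : EReal :=
  sInf ((fun m : ℝ => (m : EReal)) '' {m : ℝ | x + (m / S0) • ST ∈ A})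

/-- shifting a set of EReals by a real constant shifts the infimum -/
lemma sInf_sub_coe (S : Set EReal) (c : ℝ) :
    sInf ((fun y => y - (c : EReal)) '' S) = sInf S - (c : EReal) := by
  apply le_antisymm
  · rw [EReal.le_sub_iff_add_le (Or.inl (EReal.coe_ne_bot c)) (Or.inl (EReal.coe_ne_top c))]
    refine le_sInf fun y hy => ?_
    have h1 : sInf ((fun y => y - (c : EReal)) '' S) ≤ y - c :=
      sInf_le ⟨y, hy, rfl⟩
    exact EReal.add_le_of_le_sub h1
  · refine le_sInf ?_
    rintro e ⟨y, hy, rfl⟩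
    exact EReal.sub_le_sub (sInf_le hy) le_rfl

/-- S-additivity of the risk measure -/
lemma riskMeasure_add_smul (A : Set (Ω →ᵇ ℝ)) (P : ℝ) (hP : 0 < P) (ST : Ω →ᵇ ℝ)
    (x : Ω →ᵇ ℝ) (s : ℝ) :
    riskMeasure A P ST (x + (s / P) • ST) = riskMeasure A P ST x - (s : EReal) := by
  unfold riskMeasure
  rw [← sInf_sub_coe]
  congr 1
  ext e
  constructor
  · rintro ⟨m, hm, rfl⟩
    refine ⟨(m + s : ℝ), ?_, ?_⟩
    · refine ⟨m + s, ?_, rfl⟩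
      simp only [Set.mem_setOf_eq] at hm ⊢
      have : x + ((m + s) / P) • ST = x + (s / P) • ST + (m / P) • ST := by
        rw [add_assoc, ← add_smul, ← add_div, add_comm s m]
      rwa [this]
    · simp only [← EReal.coe_sub]
      norm_num
  · rintro ⟨e', ⟨m, hm, rfl⟩, rfl⟩
    refine ⟨m - s, ?_, by simp [EReal.coe_sub]⟩
    simp only [Set.mem_setOf_eq] at hm ⊢
    have : x + (s / P) • ST + ((m - s) / P) • ST = x + (m / P) • ST := by
      rw [add_assoc, ← add_smul, ← add_div]
      ring_nf
    rwa [this]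

/-- negative risk implies acceptability -/
lemma mem_of_riskMeasure_neg (A : Set (Ω →ᵇ ℝ)) (hA : IsAcceptanceSet A)
    (P : ℝ) (hP : 0 < P) (ST : Ω →ᵇ ℝ) (hST : 0 ≤ ST) {x : Ω →ᵇ ℝ}
    (h : riskMeasure A P ST x < 0) : x ∈ A := by
  obtain ⟨e, ⟨m, hm, rfl⟩, he⟩ := sInf_lt_iff.mp h
  have hm0 : m < 0 := EReal.coe_neg'.mp he
  have hs : x + (m / P) • ST ≤ x := by
    intro ω
    show (x + (m / P) • ST) ω ≤ x ω
    have h1 : (0 : ℝ) ≤ ST ω := hST ω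
    have h2 : m / P ≤ 0 := div_nonpos_of_nonpos_of_nonneg hm0.le hP.le
    simp only [BoundedContinuousFunction.coe_add, BoundedContinuousFunction.coe_smul,
      Pi.add_apply, Pi.smul_apply, smul_eq_mul]
    nlinarith
  exact hA.2.2 _ hm x hs

lemma riskMeasure_nonpos_of_mem (A : Set (Ω →ᵇ ℝ)) (P : ℝ) (ST : Ω →ᵇ ℝ)
    {x : Ω →ᵇ ℝ} (h : x ∈ A) : riskMeasure A P ST x ≤ 0 :=
  sInf_le ⟨0, by simpa using h, by simp⟩

theorem no_optimal_eligible_asset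
    (A : Set (Ω →ᵇ ℝ)) (hA : IsAcceptanceSet A)
    (P : ℝ) (hP : 0 < P)
    (ST : Ω →ᵇ ℝ) (hST : 0 ≤ ST) (hST0 : ST ≠ 0)
    (RT : Ω →ᵇ ℝ) (hRT : 0 ≤ RT) (hRT0 : RT ≠ 0)
    (hlscS : LowerSemicontinuous (riskMeasure A P ST))
    (hlscR : LowerSemicontinuous (riskMeasure A P RT))
    (hle : ∀ x : Ω →ᵇ ℝ, riskMeasure A P ST x ≤ riskMeasure A P RT x) :
    riskMeasure A P ST = riskMeasure A P RT := by
  funext x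
  refine le_antisymm (hle x) ?_
  show riskMeasure A P RT x ≤ sInf _
  refine le_sInf ?_
  rintro e ⟨m, hm, rfl⟩
  by_contra hcon
  push_neg at hcon
  obtain ⟨c, hc1, hc2⟩ := EReal.exists_between_coe_real hcon
  have hmc : m < c := EReal.coe_lt_coe_iff.mp hc1
  -- u := x + (m/P) • ST ∈ A
  set u := x + (m / P) • ST with hu
  have huA : u ∈ A := hm
  -- key: x + (c/P) • RT is acceptable
  set y := x + (c / P) • RT with hy
  have hkey : y + (m / P) • ST = u + (c / P) • RT := by
    rw [hy, hu]; abel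
  have h1 : riskMeasure A P ST (u + (c / P) • RT) ≤ riskMeasure A P RT u - (c : EReal) := by
    calc riskMeasure A P ST (u + (c / P) • RT)
        ≤ riskMeasure A P RT (u + (c / P) • RT) := hle _
      _ = riskMeasure A P RT u - (c : EReal) := riskMeasure_add_smul A P hP RT u c
  have h2 : riskMeasure A P ST y - (m : EReal) ≤ (0 : EReal) - (c : EReal) := by
    rw [← riskMeasure_add_smul A P hP ST y m, hkey]
    exact h1.trans (EReal.sub_le_sub (riskMeasure_nonpos_of_mem A P RT huA) le_rfl)
  have h3 : riskMeasure A P ST y ≤ ((m - c : ℝ) : EReal) :=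
    calc riskMeasure A P ST y
        = riskMeasure A P ST y - (m : EReal) + (m : EReal) := EReal.sub_add_cancel.symm
      _ ≤ (0 : EReal) - (c : EReal) + (m : EReal) := add_le_add h2 le_rfl
      _ = ((m - c : ℝ) : EReal) := by
          rw [zero_sub, ← EReal.coe_neg, ← EReal.coe_add, neg_add_eq_sub]
  have hyA : y ∈ A := by
    refine mem_of_riskMeasure_neg A hA P hP ST hST ?_
    refine h3.trans_lt ?_
    exact_mod_cast sub_neg.mpr hmc
  have : riskMeasure A P RT x ≤ (c : EReal) := sInf_le ⟨c, hyA, rfl⟩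
  exact absurd hc2 (not_lt.mpr this)
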